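/- The derivation ∂₁ on the coordinate ring of S ⊂ C^4 (defined by ∂₁(x)=0, ∂₁(z)=x², ∂₁(y)=(3z²−1)x, ∂₁(u)=2z(y²−1)x+2y(z²−1)(3z²−1), where S is cut out by xy=(z²−1)z, zu=(y²−1)y, xu=(y²−1)(z²−1)) is locally nilpotent. -/
import Mathlib


open MvPolynomial

/- Coordinates: `x = X 0`, `y = X 1`, `z = X 2`, `u = X 3`. -/

/-- Relation `xy = (z²-1)z`. -/
noncomputable abbrev rel1 : MvPolynomial (Fin 4) ℂ :=
  X 0 * X 1 - ((X 2) ^ 2 - 1) * X 2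

/-- Relation `zu = (y²-1)y`. -/
noncomputable abbrev rel2 : MvPolynomial (Fin 4) ℂ :=
  X 2 * X 3 - ((X 1) ^ 2 - 1) * X 1

/-- Relation `xu = (y²-1)(z²-1)`. -/
noncomputable abbrev rel3 : MvPolynomial (Fin 4) ℂ :=
  X 0 * X 3 - ((X 1) ^ 2 - 1) * ((X 2) ^ 2 - 1)

/-- The ideal `I` of the surface `S ⊂ ℂ⁴`. -/
noncomputable abbrev surfIdeal : Ideal (MvPolynomial (Fin 4) ℂ) :=
  Ideal.span {rel1, rel2, rel3}

/-- The coordinate ring `ℂ[x,y,z,u]/I` of `S`. -/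
abbrev surfRing4 : Type := MvPolynomial (Fin 4) ℂ ⧸ surfIdeal

/-- The prescribed values `∂₁x = 0`, `∂₁y = (3z²-1)x`, `∂₁z = x²`,
`∂₁u = 2z(y²-1)x + 2y(z²-1)(3z²-1)`. -/
noncomputable abbrev d1vals : Fin 4 → MvPolynomial (Fin 4) ℂ :=
  ![0,
    (3 * (X 2) ^ 2 - 1) * X 0,
    (X 0) ^ 2,
    2 * X 2 * ((X 1) ^ 2 - 1) * X 0 + 2 * X 1 * ((X 2) ^ 2 - 1) * (3 * (X 2) ^ 2 - 1)]

/-- The derivation `∂₁` of `ℂ[x,y,z,u]` with the prescribed values on the variables. -/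
noncomputable abbrev d1 : Derivation ℂ (MvPolynomial (Fin 4) ℂ) (MvPolynomial (Fin 4) ℂ) :=
  MvPolynomial.mkDerivation ℂ d1vals

lemma dX0 : d1 (X 0) = 0 := by simpa using mkDerivation_X ℂ d1vals 0
lemma dX1 : d1 (X 1) = (3 * (X 2) ^ 2 - 1) * X 0 := by simpa using mkDerivation_X ℂ d1vals 1
lemma dX2 : d1 (X 2) = (X 0) ^ 2 := by simpa using mkDerivation_X ℂ d1vals 2
lemma dX3 : d1 (X 3) = 2 * X 2 * ((X 1) ^ 2 - 1) * X 0
    + 2 * X 1 * ((X 2) ^ 2 - 1) * (3 * (X 2) ^ 2 - 1) := by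
  simpa using mkDerivation_X ℂ d1vals 3

lemma drel1 : d1 rel1 = 0 := by
  simp only [rel1, map_sub, Derivation.leibniz, Derivation.leibniz_pow, map_one,
    Derivation.map_one_eq_zero, smul_eq_mul, dX0, dX1, dX2, dX3]
  ring

lemma drel3 : d1 rel3 = 0 := by
  simp only [rel3, map_sub, Derivation.leibniz, Derivation.leibniz_pow, map_one,
    Derivation.map_one_eq_zero, smul_eq_mul, dX0, dX1, dX2, dX3]
  ring

lemma drel2 : d1 rel2 = X 0 * rel3 - 2 * X 1 * (3 * (X 2) ^ 2 - 1) * rel1 := by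
  simp only [rel1, rel2, rel3, map_sub, Derivation.leibniz, Derivation.leibniz_pow, map_one,
    Derivation.map_one_eq_zero, smul_eq_mul, dX0, dX1, dX2, dX3]
  ring

lemma d1_mem_ideal {f : MvPolynomial (Fin 4) ℂ} (hf : f ∈ surfIdeal) : d1 f ∈ surfIdeal := by
  have h1 : rel1 ∈ surfIdeal := Ideal.subset_span (by simp)
  have h3 : rel3 ∈ surfIdeal := Ideal.subset_span (by simp)
  refine Submodule.span_induction (p := fun f _ => d1 f ∈ surfIdeal) ?_ ?_ ?_ ?_ hf
  · rintro g (rfl | rfl | rfl)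
    · rw [drel1]; exact zero_mem _
    · rw [drel2]
      exact sub_mem (Ideal.mul_mem_left _ _ h3) (Ideal.mul_mem_left _ _ h1)
    · rw [drel3]; exact zero_mem _
  · simp
  · intro a b _ _ ha hb
    rw [map_add]; exact add_mem ha hb
  · intro a g hg hdg
    rw [smul_eq_mul, Derivation.leibniz, smul_eq_mul, smul_eq_mul]
    exact add_mem (Ideal.mul_mem_left _ _ hdg) (Ideal.mul_mem_right _ _ hg)

/-- Locally nilpotent elements of `ℂ[x,y,z,u]` under `∂₁`. -/
def LN (f : MvPolynomial (Fin 4) ℂ) : Prop := ∃ n, (⇑d1)^[n] f = 0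

lemma iter_zero (n : ℕ) : (⇑d1)^[n] (0 : MvPolynomial (Fin 4) ℂ) = 0 := by
  induction n with
  | zero => rfl
  | succ n ih => rw [Function.iterate_succ_apply, map_zero, ih]

lemma iter_add (n : ℕ) (f g : MvPolynomial (Fin 4) ℂ) :
    (⇑d1)^[n] (f + g) = (⇑d1)^[n] f + (⇑d1)^[n] g := by
  induction n generalizing f g with
  | zero => rfl
  | succ n ih => rw [Function.iterate_succ_apply, map_add, ih,
      Function.iterate_succ_apply, Function.iterate_succ_apply]

lemma iter_neg (n : ℕ) (f : MvPolynomial (Fin 4) ℂ) :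
    (⇑d1)^[n] (-f) = -(⇑d1)^[n] f := by
  induction n generalizing f with
  | zero => rfl
  | succ n ih => rw [Function.iterate_succ_apply, map_neg, ih, Function.iterate_succ_apply]

lemma iter_ge {f : MvPolynomial (Fin 4) ℂ} {a : ℕ} (hf : (⇑d1)^[a] f = 0) {n : ℕ}
    (h : a ≤ n) : (⇑d1)^[n] f = 0 := by
  obtain ⟨k, rfl⟩ := Nat.exists_eq_add_of_le h
  rw [Nat.add_comm, Function.iterate_add_apply, hf, iter_zero]

lemma LN_add {f g : MvPolynomial (Fin 4) ℂ} (hf : LN f) (hg : LN g) : LN (f + g) := by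
  obtain ⟨a, ha⟩ := hf; obtain ⟨b, hb⟩ := hg
  exact ⟨max a b, by rw [iter_add, iter_ge ha (le_max_left a b),
    iter_ge hb (le_max_right a b), add_zero]⟩

lemma LN_mul_aux (n : ℕ) : ∀ (a b : ℕ) (f g : MvPolynomial (Fin 4) ℂ), a + b = n →
    (⇑d1)^[a] f = 0 → (⇑d1)^[b] g = 0 → (⇑d1)^[n] (f * g) = 0 := by
  induction n with
  | zero =>
      rintro a b f g h ha hb
      obtain ⟨rfl, rfl⟩ : a = 0 ∧ b = 0 := by omega
      simp only [Function.iterate_zero, id] at ha ⊢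
      rw [ha, zero_mul]
  | succ n ih =>
      rintro a b f g h ha hb
      match a, b with
      | 0, b =>
          simp only [Function.iterate_zero, id] at ha
          rw [ha, zero_mul, iter_zero]
      | a, 0 =>
          simp only [Function.iterate_zero, id] at hb
          rw [hb, mul_zero, iter_zero]
      | a + 1, b + 1 =>
          rw [Function.iterate_succ_apply, Derivation.leibniz, smul_eq_mul, smul_eq_mul,
            iter_add]
          rw [ih (a + 1) b f (d1 g) (by omega) ha
            (by rwa [← Function.iterate_succ_apply]),
            ih (b + 1) a g (d1 f) (by omega) hb
            (by rwa [← Function.iterate_succ_apply]), add_zero]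

lemma LN_mul {f g : MvPolynomial (Fin 4) ℂ} (hf : LN f) (hg : LN g) : LN (f * g) := by
  obtain ⟨a, ha⟩ := hf; obtain ⟨b, hb⟩ := hg
  exact ⟨a + b, LN_mul_aux (a + b) a b f g rfl ha hb⟩

lemma LN_C (a : ℂ) : LN (C a : MvPolynomial (Fin 4) ℂ) :=
  ⟨1, by simpa using d1.map_algebraMap a⟩

lemma LN_neg {f : MvPolynomial (Fin 4) ℂ} (hf : LN f) : LN (-f) := by
  obtain ⟨a, ha⟩ := hf; exact ⟨a, by rw [iter_neg, ha, neg_zero]⟩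

lemma LN_sub {f g : MvPolynomial (Fin 4) ℂ} (hf : LN f) (hg : LN g) : LN (f - g) := by
  rw [sub_eq_add_neg]; exact LN_add hf (LN_neg hg)

lemma LN_num (n : ℕ) : LN (n : MvPolynomial (Fin 4) ℂ) := by
  have := LN_C (n : ℂ); rwa [map_natCast] at this

lemma LN_one : LN (1 : MvPolynomial (Fin 4) ℂ) := by simpa using LN_num 1

lemma LN_of_d1 {f : MvPolynomial (Fin 4) ℂ} (h : LN (d1 f)) : LN f := by
  obtain ⟨n, hn⟩ := h
  exact ⟨n + 1, by rwa [Function.iterate_succ_apply]⟩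

lemma LN_x : LN (X 0 : MvPolynomial (Fin 4) ℂ) :=
  LN_of_d1 (by rw [dX0]; exact ⟨0, rfl⟩)

lemma LN_z : LN (X 2 : MvPolynomial (Fin 4) ℂ) :=
  LN_of_d1 (by rw [dX2, pow_two]; exact LN_mul LN_x LN_x)

lemma LN_y : LN (X 1 : MvPolynomial (Fin 4) ℂ) := by
  refine LN_of_d1 ?_
  rw [dX1]
  exact LN_mul (LN_sub (LN_mul (LN_num 3) (by rw [pow_two]; exact LN_mul LN_z LN_z)) LN_one) LN_x

lemma LN_u : LN (X 3 : MvPolynomial (Fin 4) ℂ) := by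
  refine LN_of_d1 ?_
  rw [dX3]
  have hy2 : LN (((X 1 : MvPolynomial (Fin 4) ℂ)) ^ 2 - 1) :=
    LN_sub (by rw [pow_two]; exact LN_mul LN_y LN_y) LN_one
  have hz2 : LN (((X 2 : MvPolynomial (Fin 4) ℂ)) ^ 2 - 1) :=
    LN_sub (by rw [pow_two]; exact LN_mul LN_z LN_z) LN_one
  have h3z2 : LN ((3 : MvPolynomial (Fin 4) ℂ) * (X 2) ^ 2 - 1) :=
    LN_sub (LN_mul (LN_num 3) (by rw [pow_two]; exact LN_mul LN_z LN_z)) LN_one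
  exact LN_add
    (LN_mul (LN_mul (LN_mul (LN_num 2) LN_z) hy2) LN_x)
    (LN_mul (LN_mul (LN_mul (LN_num 2) LN_y) hz2) h3z2)

lemma LN_X (i : Fin 4) : LN (X i : MvPolynomial (Fin 4) ℂ) := by
  fin_cases i
  · exact LN_x
  · exact LN_y
  · exact LN_z
  · exact LN_u

lemma LN_all (f : MvPolynomial (Fin 4) ℂ) : LN f := by
  induction f using MvPolynomial.induction_on with
  | C a => exact LN_C a
  | add p q hp hq => exact LN_add hp hq
  | mul_X p i hp => exact LN_mul hp (LN_X i)

/-- `∂₁` descends to the quotient ring. -/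
noncomputable def D1 : Derivation ℂ surfRing4 surfRing4 :=
  Derivation.liftOfSurjective (f := Ideal.Quotient.mkₐ ℂ surfIdeal)
    (Ideal.Quotient.mkₐ_surjective ℂ surfIdeal) (d := d1)
    (fun x hx => by
      rw [Ideal.Quotient.mkₐ_eq_mk, Ideal.Quotient.eq_zero_iff_mem] at hx ⊢
      exact d1_mem_ideal hx)

lemma D1_mk (f : MvPolynomial (Fin 4) ℂ) :
    D1 (Ideal.Quotient.mk surfIdeal f) = Ideal.Quotient.mk surfIdeal (d1 f) := by
  have := Derivation.liftOfSurjective_apply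
    (f := Ideal.Quotient.mkₐ ℂ surfIdeal)
    (Ideal.Quotient.mkₐ_surjective ℂ surfIdeal) (d := d1)
    (fun x hx => by
      rw [Ideal.Quotient.mkₐ_eq_mk, Ideal.Quotient.eq_zero_iff_mem] at hx ⊢
      exact d1_mem_ideal hx) f
  simpa [D1, Ideal.Quotient.mkₐ_eq_mk] using this

lemma D1_iter_mk (n : ℕ) (f : MvPolynomial (Fin 4) ℂ) :
    (⇑D1)^[n] (Ideal.Quotient.mk surfIdeal f) =
      Ideal.Quotient.mk surfIdeal ((⇑d1)^[n] f) := by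
  induction n generalizing f with
  | zero => rfl
  | succ n ih =>
      rw [Function.iterate_succ_apply, Function.iterate_succ_apply, D1_mk, ih]

/-- The derivation `∂₁` (with `∂₁x = 0`, `∂₁z = x²`, `∂₁y = (3z²-1)x`,
`∂₁u = 2z(y²-1)x + 2y(z²-1)(3z²-1)`) on the coordinate ring of the surface
`S ⊂ ℂ⁴` cut out by `xy=(z²-1)z`, `zu=(y²-1)y`, `xu=(y²-1)(z²-1)` is
locally nilpotent. -/
theorem stmt_7 :
    ∃ D : Derivation ℂ surfRing4 surfRing4,
      (∀ i : Fin 4, D (Ideal.Quotient.mk surfIdeal (X i)) =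
        Ideal.Quotient.mk surfIdeal (d1vals i)) ∧
      ∀ f : surfRing4, ∃ n : ℕ, (⇑D)^[n] f = 0 := by
  refine ⟨D1, fun i => ?_, fun f => ?_⟩
  · rw [D1_mk, mkDerivation_X]
  · obtain ⟨g, rfl⟩ := Ideal.Quotient.mk_surjective f
    obtain ⟨n, hn⟩ := LN_all g
    exact ⟨n, by rw [D1_iter_mk, hn, map_zero]⟩
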